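/- If R0 = 4 v_u v_w with 1/2 < v_w < 1 and v_u = 1 - v_w, then the quadratic (v_u/v_w) r^2 + (v_u/v_w - 1) r + (1 - R0)/R0 = 0 has a unique (double) root r = (2 v_w - 1)/(2 v_u), which is strictly positive. -/

import Mathlib

theorem double_root_at_bifurcation
    (v_w R0 : ℝ) (hv1 : 1 / 2 < v_w) (hv2 : v_w < 1)
    (hR0 : R0 = 4 * (1 - v_w) * v_w) :
    let v_u := 1 - v_w
    (∀ r : ℝ, (v_u / v_w) * r ^ 2 + (v_u / v_w - 1) * r + (1 - R0) / R0 = 0 ↔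
        r = (2 * v_w - 1) / (2 * v_u)) ∧
    0 < (2 * v_w - 1) / (2 * v_u) := by
  intro v_u
  have hwpos : 0 < v_w := by linarith
  have hupos : 0 < v_u := by simp only [v_u]; linarith
  have hRpos : 0 < R0 := by rw [hR0]; positivity
  have hw : v_w ≠ 0 := ne_of_gt hwpos
  have hu : v_u ≠ 0 := ne_of_gt hupos
  have hRne : R0 ≠ 0 := ne_of_gt hRpos
  constructor
  · intro r
    have key : (v_u / v_w) * r ^ 2 + (v_u / v_w - 1) * r + (1 - R0) / R0 =
        (v_u / v_w) * (r - (2 * v_w - 1) / (2 * v_u)) ^ 2 := by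
      field_simp [v_u, hR0]
      rw [hR0]; simp only [v_u]; ring
    rw [key]
    constructor
    · intro h
      have h2 : (r - (2 * v_w - 1) / (2 * v_u)) ^ 2 = 0 := by
        have := mul_eq_zero.mp h
        rcases this with h' | h'
        · exact absurd h' (div_ne_zero hu hw)
        · exact h'
      have := pow_eq_zero_iff (n := 2) (by norm_num) |>.mp h2
      linarith
    · intro h; rw [h]; ring
  · have : 0 < 2 * v_w - 1 := by linarith
    positivity
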